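/- There exists a finitely generated group G and two symmetric aperiodic probability measures μ, τ on G, each with support generating G, such that A_{G,μ} ≠ A_{G,τ}. (Concretely G = C₂ * C₃ works: one can choose μ with a ∈ A_μ and τ with b ∈ A_τ, and if A_μ = A_τ then this common subgroup would contain ⟨a,b⟩ = G, contradicting non-amenability of G.) -/

import Mathlib

open Filter Topology
open scoped Classical

/-- Convolution of two real-valued functions on a discrete group. -/
noncomputable def conv {G : Type*} [Group G] (μ τ : G → ℝ) : G → ℝ :=
  fun y => ∑' x : G, μ x * τ (x⁻¹ * y)

/-- `n`-fold convolution power, with `μ^{*0}` the Dirac mass at the identity. -/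
noncomputable def convPow {G : Type*} [Group G] (μ : G → ℝ) : ℕ → G → ℝ
  | 0 => fun x => if x = 1 then 1 else 0
  | n + 1 => conv (convPow μ n) μ

/-- `μ` is a probability measure on the discrete group `G`. -/
def IsProb {G : Type*} [Group G] (μ : G → ℝ) : Prop :=
  (∀ x, 0 ≤ μ x) ∧ ∑' x : G, μ x = 1

/-- `μ` is symmetric. -/
def MeasSymm {G : Type*} [Group G] (μ : G → ℝ) : Prop := ∀ x, μ x⁻¹ = μ x

/-- `μ` is aperiodic: `gcd { n ≥ 1 | μ^{*n}(e) > 0 } = 1`. -/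
def IsAperiodic {G : Type*} [Group G] (μ : G → ℝ) : Prop :=
  ∀ d : ℕ, (∀ n : ℕ, 1 ≤ n → 0 < convPow μ n 1 → d ∣ n) → d = 1

/-- The support of `μ` generates `G`. -/
def GeneratingSupport {G : Type*} [Group G] (μ : G → ℝ) : Prop :=
  Subgroup.closure {x : G | 0 < μ x} = ⊤

/-- The set `A_μ = { g | μ^{*n}(g)/μ^{*n}(e) → 1 }`. -/
def Amu {G : Type*} [Group G] (μ : G → ℝ) : Set G :=
  {g | Tendsto (fun n => convPow μ n g / convPow μ n 1) atTop (𝓝 1)}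

/-- ℓ² inner product. -/
noncomputable def l2inner {G : Type*} (f h : G → ℝ) : ℝ := ∑' x : G, f x * h x

/-- ℓ² norm. -/
noncomputable def l2norm {G : Type*} (f : G → ℝ) : ℝ :=
  Real.sqrt (∑' x : G, (f x) ^ 2)

/-- Left translation: `(g · f)(x) = f (g⁻¹ x)`. -/
def ltrans {G : Type*} [Group G] (g : G) (f : G → ℝ) : G → ℝ := fun x => f (g⁻¹ * x)

/-- The normalized convolution powers `ξ_n = μ^{*n}/‖μ^{*n}‖₂`. -/
noncomputable def xi {G : Type*} [Group G] (μ : G → ℝ) (n : ℕ) : G → ℝ :=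
  fun x => convPow μ n x / l2norm (convPow μ n)

/-- Reiter-type characterization of amenability: a sequence of almost-invariant
unit vectors in `ℓ²(K)`. -/
def ReiterAmenable (K : Type*) [Group K] : Prop :=
  ∃ ψ : ℕ → K → ℝ, (∀ n, ∑' x : K, (ψ n x) ^ 2 = 1) ∧
    ∀ k : K, Tendsto
      (fun n => Real.sqrt (∑' x : K, (ψ n (k⁻¹ * x) - ψ n x) ^ 2)) atTop (𝓝 0)

/-- The witness property for statement 13. -/
def Stmt13Witness (G : Type) [Group G] (μ τ : G → ℝ) : Prop :=
  Group.FG G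
    ∧ IsProb μ ∧ MeasSymm μ ∧ IsAperiodic μ ∧ GeneratingSupport μ
    ∧ IsProb τ ∧ MeasSymm τ ∧ IsAperiodic τ ∧ GeneratingSupport τ
    ∧ Amu μ ≠ Amu τ


namespace Stmt13Aux

inductive Ltr : Type where
  | A : Ltr
  | B1 : Ltr
  | B2 : Ltr
deriving DecidableEq

/-- `true` if the letter belongs to the `C₂` factor. -/
def gA : Ltr → Bool
  | .A => true
  | .B1 => false
  | .B2 => false

/-- Alternation relation for reduced words. -/
def LRel : Ltr → Ltr → Prop := fun x y => gA x ≠ gA y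

/-- Reduced words for the free product `C₂ * C₃`. -/
abbrev RW : Type := {w : List Ltr // w.Chain' LRel}

def aList : List Ltr → List Ltr
  | .A :: t => t
  | w => .A :: w

lemma aList_chain' {w : List Ltr} (h : w.Chain' LRel) : (aList w).Chain' LRel := by
  match w with
  | [] => exact List.isChain_singleton _
  | .A :: t => exact h.tail
  | .B1 :: t => exact h.cons (by rintro y hy; simp at hy; subst hy; simp [LRel, gA])
  | .B2 :: t => exact h.cons (by rintro y hy; simp at hy; subst hy; simp [LRel, gA])

lemma aList_aList {w : List Ltr} (h : w.Chain' LRel) : aList (aList w) = w := by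
  match w with
  | [] => rfl
  | .A :: t =>
    show aList t = t.cons .A
    match t, h with
    | [], _ => rfl
    | .A :: t', h => exact absurd (List.isChain_cons_cons.1 h).1 (by simp [LRel, gA])
    | .B1 :: t', _ => rfl
    | .B2 :: t', _ => rfl
  | .B1 :: t => rfl
  | .B2 :: t => rfl

def aFun : RW → RW := fun w => ⟨aList w.1, aList_chain' w.2⟩

def aPerm : Equiv.Perm RW :=
  { toFun := aFun
    invFun := aFun
    left_inv := fun w => Subtype.ext (aList_aList w.2)
    right_inv := fun w => Subtype.ext (aList_aList w.2) }

def bList : List Ltr → List Ltr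
  | .B1 :: t => .B2 :: t
  | .B2 :: t => t
  | w => .B1 :: w

lemma bList_chain' {w : List Ltr} (h : w.Chain' LRel) : (bList w).Chain' LRel := by
  match w with
  | [] => exact List.isChain_singleton _
  | .B1 :: t =>
    refine (List.isChain_cons.2 ⟨?_, h.tail⟩)
    have := List.isChain_cons.1 h
    rintro y hy
    have := this.1 y hy
    simpa [LRel, gA] using this
  | .B2 :: t => exact h.tail
  | .A :: t => exact h.cons (by rintro y hy; simp at hy; subst hy; simp [LRel, gA])

lemma bList_bList_bList {w : List Ltr} (h : w.Chain' LRel) :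
    bList (bList (bList w)) = w := by
  match w with
  | [] => rfl
  | .B1 :: t =>
    show bList (bList (.B2 :: t)) = .B1 :: t
    show bList t = .B1 :: t
    match t, h with
    | [], _ => rfl
    | .A :: t', _ => rfl
    | .B1 :: t', h => exact absurd (List.isChain_cons_cons.1 h).1 (by simp [LRel, gA])
    | .B2 :: t', h => exact absurd (List.isChain_cons_cons.1 h).1 (by simp [LRel, gA])
  | .B2 :: t =>
    show bList (bList t) = .B2 :: t
    match t, h with
    | [], _ => rfl
    | .A :: t', _ => rfl
    | .B1 :: t', h => exact absurd (List.isChain_cons_cons.1 h).1 (by simp [LRel, gA])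
    | .B2 :: t', h => exact absurd (List.isChain_cons_cons.1 h).1 (by simp [LRel, gA])
  | .A :: t => rfl

def bFun : RW → RW := fun w => ⟨bList w.1, bList_chain' w.2⟩

def bPerm : Equiv.Perm RW :=
  { toFun := bFun
    invFun := fun w => bFun (bFun w)
    left_inv := fun w => Subtype.ext (bList_bList_bList w.2)
    right_inv := fun w => Subtype.ext (bList_bList_bList w.2) }

lemma aPerm_sq : aPerm * aPerm = 1 :=
  Equiv.ext fun w => Subtype.ext (aList_aList w.2)

lemma bPerm_cube : bPerm * bPerm * bPerm = 1 :=
  Equiv.ext fun w => Subtype.ext (bList_bList_bList w.2)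

end Stmt13Aux

namespace Stmt13Aux

/-- The group `G`, a subgroup of permutations of reduced words, generated by `a` and `b`. -/
def Gp : Subgroup (Equiv.Perm RW) := Subgroup.closure {aPerm, bPerm}

abbrev G : Type := ↥Gp

def aG : G := ⟨aPerm, Subgroup.subset_closure (by simp)⟩
def bG : G := ⟨bPerm, Subgroup.subset_closure (by simp)⟩

lemma aG_sq : aG * aG = 1 := by
  apply Subtype.ext
  exact aPerm_sq

lemma bG_cube : bG * bG * bG = 1 := by
  apply Subtype.ext
  exact bPerm_cube

lemma aG_inv : aG⁻¹ = aG := by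
  rw [inv_eq_iff_mul_eq_one]; exact aG_sq

lemma bG_inv : bG⁻¹ = bG * bG := by
  rw [inv_eq_iff_mul_eq_one, ← mul_assoc]; exact bG_cube

lemma bG_sq_inv : (bG * bG)⁻¹ = bG := by
  rw [inv_eq_iff_mul_eq_one, mul_assoc, ← bG_inv, mul_inv_cancel]

/-- base point: the empty word. -/
def pt : RW := ⟨[], List.isChain_nil⟩

/-- first letter of the image of the base point. -/
noncomputable def hd (g : G) : Option Ltr := ((g : Equiv.Perm RW) pt).1.head?

def Pa : Set G := {g | hd g = some .A}
def Qb : Set G := {g | hd g = some .B1}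
def Rb : Set G := {g | hd g = some .B2}

lemma hd_mul (g h : G) : hd (g * h) = (((g : Equiv.Perm RW)) ((h : Equiv.Perm RW) pt)).1.head? := by
  rfl

lemma head?_aFun (w : RW) :
    ((aFun w).1.head? = some Ltr.A) ↔ ¬ (w.1.head? = some Ltr.A) := by
  rcases w with ⟨w, hw⟩
  match w with
  | [] => simp [aFun, aList]
  | .A :: t =>
    simp only [aFun, aList, List.head?]
    constructor
    · intro ht
      match t, hw, ht with
      | .A :: t', hw, _ => exact absurd (List.isChain_cons_cons.1 hw).1 (by simp [LRel, gA])
    · intro hc; exact absurd trivial hc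
  | .B1 :: t => simp [aFun, aList]
  | .B2 :: t => simp [aFun, aList]

lemma mem_Pa_iff (g : G) : g ∈ Pa ↔ (aG * g) ∉ Pa := by
  have e : hd (aG * g) = ((aFun ((g : Equiv.Perm RW) pt)).1.head?) := rfl
  show hd g = some Ltr.A ↔ ¬ hd (aG * g) = some Ltr.A
  rw [e, head?_aFun]
  exact not_not.symm

lemma head?_bFun_of_A {w : RW} (h : w.1.head? = some Ltr.A) :
    (bFun w).1.head? = some Ltr.B1 := by
  rcases w with ⟨w, hw⟩
  match w with
  | .A :: t => rfl

lemma head?_bFun_of_B1 {w : RW} (h : w.1.head? = some Ltr.B1) :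
    (bFun w).1.head? = some Ltr.B2 := by
  rcases w with ⟨w, hw⟩
  match w with
  | .B1 :: t => rfl

lemma mem_Qb_of_Pa {g : G} (h : g ∈ Pa) : bG * g ∈ Qb := by
  have e : hd (bG * g) = ((bFun ((g : Equiv.Perm RW) pt)).1.head?) := rfl
  simp only [Qb, Set.mem_setOf_eq, e]
  exact head?_bFun_of_A h

lemma mem_Rb_of_Pa {g : G} (h : g ∈ Pa) : (bG * bG) * g ∈ Rb := by
  have e : hd ((bG * bG) * g) = ((bFun (bFun ((g : Equiv.Perm RW) pt))).1.head?) := rfl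
  simp only [Rb, Set.mem_setOf_eq, e]
  exact head?_bFun_of_B1 (head?_bFun_of_A h)

lemma aG_ne_one : aG ≠ 1 := by
  intro h
  have : aPerm = 1 := congrArg Subtype.val h
  have : aPerm pt = pt := by rw [this]; rfl
  have : ([Ltr.A] : List Ltr) = [] := congrArg Subtype.val this
  simp at this

lemma closure_ab_top : Subgroup.closure ({aG, bG} : Set G) = ⊤ := by
  have h1 : Subgroup.closure ((Gp.subtype) ⁻¹' {aPerm, bPerm}) = ⊤ :=
    Subgroup.closure_preimage_eq_top {aPerm, bPerm}
  rw [← h1]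
  apply le_antisymm
  · exact le_top.trans (le_of_eq h1.symm)
  · apply Subgroup.closure_mono
    rintro x hx
    rcases hx with h | h
    · left; exact Subtype.ext h
    · right; exact Subtype.ext h

end Stmt13Aux

namespace Stmt13Aux

instance maCoeFun {H : Type} [Group H] : CoeFun (MonoidAlgebra ℝ H) (fun _ => H → ℝ) :=
  ⟨fun f => ⇑f.coeff⟩

section MA

variable {H : Type} [Group H]

lemma ma_add_apply (f g : MonoidAlgebra ℝ H) (x : H) : (f + g) x = f x + g x := rfl

lemma ma_smul_apply (c : ℝ) (f : MonoidAlgebra ℝ H) (x : H) : (c • f) x = c • f x := rfl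

lemma ma_single_apply {a x : H} {b : ℝ} [Decidable (a = x)] :
    (MonoidAlgebra.single a b) x = if a = x then b else 0 := Finsupp.single_apply

lemma summable_left (f : MonoidAlgebra ℝ H) (h : H → ℝ) :
    Summable (fun x => f x * h x) :=
  summable_of_ne_finset_zero (s := f.coeff.support)
    (fun x hx => by rw [Finsupp.notMem_support_iff.1 hx, zero_mul])

lemma summable_right (f : MonoidAlgebra ℝ H) (h : H → ℝ) :
    Summable (fun x => h x * f x) :=
  summable_of_ne_finset_zero (s := f.coeff.support)
    (fun x hx => by rw [Finsupp.notMem_support_iff.1 hx, mul_zero])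

lemma conv_coe (f g : MonoidAlgebra ℝ H) : _root_.conv (⇑f) (⇑g) = ⇑(f * g) := by
  funext y
  have h1 : _root_.conv (⇑f) (⇑g) y = ∑' x, f x * g (x⁻¹ * y) := rfl
  rw [h1, tsum_eq_sum (s := f.coeff.support)
    (fun x hx => by rw [Finsupp.notMem_support_iff.1 hx, zero_mul])]
  rw [MonoidAlgebra.coeff_mul_apply_left]
  rw [Finsupp.sum]

lemma mul_apply_tsum (f g : MonoidAlgebra ℝ H) (y : H) :
    (f * g) y = ∑' x, f x * g (x⁻¹ * y) :=
  (congrFun (conv_coe f g) y).symm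

lemma convPow_coe (f : MonoidAlgebra ℝ H) : ∀ n, convPow (⇑f) n = ⇑(f ^ n)
  | 0 => by
    funext x
    show (if x = 1 then (1:ℝ) else 0) = (1 : MonoidAlgebra ℝ H) x
    rw [MonoidAlgebra.one_def, ma_single_apply]
    by_cases h : x = 1 <;> simp [h, eq_comm]
  | (n+1) => by
    show _root_.conv (convPow (⇑f) n) ⇑f = _
    rw [convPow_coe f n, conv_coe, ← pow_succ]

/-- total mass as an algebra hom. -/
noncomputable def totalMass : MonoidAlgebra ℝ H →ₐ[ℝ] ℝ :=
  MonoidAlgebra.lift ℝ ℝ H 1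

lemma totalMass_single (g : H) (c : ℝ) : totalMass (MonoidAlgebra.single g c) = c := by
  simp [totalMass, MonoidAlgebra.lift_single]

lemma tsum_coe (f : MonoidAlgebra ℝ H) : ∑' x, f x = totalMass f := by
  rw [tsum_eq_sum (s := f.coeff.support) (fun x hx => Finsupp.notMem_support_iff.1 hx)]
  rw [totalMass, MonoidAlgebra.lift_apply]
  rw [Finsupp.sum]
  exact Finset.sum_congr rfl (fun x _ => by simp)

/-- reversal `f(x) ↦ f(x⁻¹)`. -/
noncomputable def rev (f : MonoidAlgebra ℝ H) : MonoidAlgebra ℝ H :=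
  MonoidAlgebra.ofCoeff (Finsupp.equivMapDomain (Equiv.inv H) f.coeff)

lemma rev_apply (f : MonoidAlgebra ℝ H) (x : H) : rev f x = f x⁻¹ := by
  simp [rev, MonoidAlgebra.coeff_ofCoeff, Finsupp.equivMapDomain_apply]

lemma rev_single (g : H) (c : ℝ) :
    rev (MonoidAlgebra.single g c) = MonoidAlgebra.single g⁻¹ c := by
  simp [rev, MonoidAlgebra.coeff_single]

lemma rev_add (f g : MonoidAlgebra ℝ H) : rev (f + g) = rev f + rev g := by
  ext x; rw [ma_add_apply, rev_apply, ma_add_apply, rev_apply, rev_apply]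

lemma rev_smul (c : ℝ) (f : MonoidAlgebra ℝ H) : rev (c • f) = c • rev f := by
  ext x; rw [ma_smul_apply, rev_apply, ma_smul_apply, rev_apply]

lemma rev_mul (f g : MonoidAlgebra ℝ H) : rev (f * g) = rev g * rev f := by
  ext x
  rw [rev_apply, mul_apply_tsum, mul_apply_tsum]
  have e := Equiv.tsum_eq (Equiv.mulLeft x) (fun z => rev g z * rev f (z⁻¹ * x))
  rw [← e]
  apply tsum_congr
  intro y
  simp only [Equiv.coe_mulLeft, rev_apply, mul_inv_rev]
  rw [mul_comm]
  congr 2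
  group

lemma rev_pow (f : MonoidAlgebra ℝ H) (hf : rev f = f) : ∀ n, rev (f ^ n) = f ^ n
  | 0 => by
    rw [pow_zero]
    show rev (MonoidAlgebra.single 1 1) = _
    rw [rev_single, inv_one]; rfl
  | (n+1) => by
    rw [pow_succ, rev_mul, hf, rev_pow f hf n]; exact (pow_succ' f n).symm

lemma mul_nonneg_coe {f g : MonoidAlgebra ℝ H} (hf : ∀ x, 0 ≤ f x) (hg : ∀ x, 0 ≤ g x) :
    ∀ x, 0 ≤ (f * g) x := by
  intro y
  rw [mul_apply_tsum]
  exact tsum_nonneg (fun x => mul_nonneg (hf x) (hg _))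

lemma mul_apply_le {f g : MonoidAlgebra ℝ H} (hf : ∀ x, 0 ≤ f x) (hg : ∀ x, 0 ≤ g x)
    (y x : H) : f y * g (y⁻¹ * x) ≤ (f * g) x := by
  rw [mul_apply_tsum]
  exact Summable.le_tsum (summable_left f (fun z => g (z⁻¹ * x))) y
    (fun z _ => mul_nonneg (hf z) (hg _))

lemma pow_nonneg_coe {f : MonoidAlgebra ℝ H} (hf : ∀ x, 0 ≤ f x) :
    ∀ n x, 0 ≤ (f ^ n) x
  | 0, x => by
    rw [pow_zero]
    show (0:ℝ) ≤ (MonoidAlgebra.single 1 1 : MonoidAlgebra ℝ H) x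
    rw [ma_single_apply]
    split <;> norm_num
  | (n+1), x => by
    rw [pow_succ]
    exact mul_nonneg_coe (pow_nonneg_coe hf n) hf x

end MA

end Stmt13Aux

namespace Stmt13Aux

section Meas

noncomputable def sg (g : G) : MonoidAlgebra ℝ G := MonoidAlgebra.single g 1

lemma sg_mul (g h : G) : sg g * sg h = sg (g * h) := by
  simp [sg, MonoidAlgebra.single_mul_single]

lemma sg_apply (g x : G) : sg g x = if g = x then (1:ℝ) else 0 := ma_single_apply

lemma sg_nonneg (g x : G) : 0 ≤ sg g x := by rw [sg_apply]; split <;> norm_num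

lemma sg_self (g : G) : sg g g = 1 := by simp [sg_apply]

lemma sg_one_eq : sg (1 : G) = 1 := rfl

noncomputable def Eel : MonoidAlgebra ℝ G := sg 1 + sg aG
noncomputable def Bel : MonoidAlgebra ℝ G := sg 1 + sg bG + sg (bG * bG)
noncomputable def Sel : MonoidAlgebra ℝ G := sg 1 + sg aG + sg bG + sg (bG * bG)

noncomputable def mE : MonoidAlgebra ℝ G := (16:ℝ)⁻¹ • (Eel * Sel * Eel)
noncomputable def mB : MonoidAlgebra ℝ G := (36:ℝ)⁻¹ • (Bel * Sel * Bel)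

lemma Eel_nonneg (x : G) : 0 ≤ Eel x := by
  rw [Eel, ma_add_apply]; exact add_nonneg (sg_nonneg _ _) (sg_nonneg _ _)

lemma Bel_nonneg (x : G) : 0 ≤ Bel x := by
  rw [Bel, ma_add_apply, ma_add_apply]
  exact add_nonneg (add_nonneg (sg_nonneg _ _) (sg_nonneg _ _)) (sg_nonneg _ _)

lemma Sel_nonneg (x : G) : 0 ≤ Sel x := by
  rw [Sel, ma_add_apply, ma_add_apply, ma_add_apply]
  exact add_nonneg (add_nonneg (add_nonneg (sg_nonneg _ _) (sg_nonneg _ _)) (sg_nonneg _ _))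
    (sg_nonneg _ _)

lemma Eel_ge_one (x : G) : sg 1 x ≤ Eel x := by
  rw [Eel, ma_add_apply]; nlinarith [sg_nonneg aG x]

lemma Eel_ge_a (x : G) : sg aG x ≤ Eel x := by
  rw [Eel, ma_add_apply]; nlinarith [sg_nonneg 1 x]

lemma Bel_ge_one (x : G) : sg 1 x ≤ Bel x := by
  rw [Bel, ma_add_apply, ma_add_apply]
  nlinarith [sg_nonneg bG x, sg_nonneg (bG*bG) x]

lemma Sel_ge (y x : G) (hy : y ∈ ({1, aG, bG, bG*bG} : Set G)) : sg y x ≤ Sel x := by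
  rw [Sel, ma_add_apply, ma_add_apply, ma_add_apply]
  have n1 := sg_nonneg (1:G) x
  have n2 := sg_nonneg aG x
  have n3 := sg_nonneg bG x
  have n4 := sg_nonneg (bG*bG) x
  rcases hy with rfl | rfl | rfl | rfl <;> nlinarith

lemma mE_nonneg (x : G) : 0 ≤ mE x := by
  rw [mE, ma_smul_apply, smul_eq_mul]
  exact mul_nonneg (by norm_num)
    (mul_nonneg_coe (mul_nonneg_coe Eel_nonneg Sel_nonneg) Eel_nonneg x)

lemma mB_nonneg (x : G) : 0 ≤ mB x := by
  rw [mB, ma_smul_apply, smul_eq_mul]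
  exact mul_nonneg (by norm_num)
    (mul_nonneg_coe (mul_nonneg_coe Bel_nonneg Sel_nonneg) Bel_nonneg x)

lemma one_le_prod3 {x y z : ℝ} (hx : 1 ≤ x) (hy : 1 ≤ y) (hz : 1 ≤ z) :
    1 ≤ x * (y * z) := by
  have h1 : (1:ℝ) ≤ y * z := by nlinarith
  nlinarith

/-- lower bound on a triple product coefficient. -/
lemma triple_ge {f s h : MonoidAlgebra ℝ G} (hf : ∀ x, 0 ≤ f x) (hs : ∀ x, 0 ≤ s x)
    (hh : ∀ x, 0 ≤ h x) (y z x : G) :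
    f y * (s z * h (z⁻¹ * (y⁻¹ * x))) ≤ (f * s * h) x := by
  rw [mul_assoc]
  calc f y * (s z * h (z⁻¹ * (y⁻¹ * x))) ≤ f y * ((s * h) (y⁻¹ * x)) := by
        apply mul_le_mul_of_nonneg_left _ (hf y)
        exact mul_apply_le hs hh z (y⁻¹ * x)
    _ ≤ (f * (s * h)) x := mul_apply_le hf (mul_nonneg_coe hs hh) y x

lemma mE_one_pos : 0 < mE 1 := by
  rw [mE, ma_smul_apply, smul_eq_mul]
  have h := triple_ge Eel_nonneg Sel_nonneg Eel_nonneg 1 1 1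
  simp only [mul_one, inv_one, one_mul] at h
  have hE := Eel_ge_one 1
  have hS := Sel_ge 1 1 (by simp)
  rw [sg_self] at hE hS
  have key : (1:ℝ) ≤ (Eel * Sel * Eel) 1 := le_trans (one_le_prod3 hE hS hE) h
  nlinarith

lemma mE_a_pos : 0 < mE aG := by
  rw [mE, ma_smul_apply, smul_eq_mul]
  have h := triple_ge Eel_nonneg Sel_nonneg Eel_nonneg aG 1 aG
  simp only [inv_one, one_mul, inv_mul_cancel] at h
  have hE := Eel_ge_a aG
  have hE1 := Eel_ge_one 1
  have hS := Sel_ge 1 1 (by simp)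
  rw [sg_self] at hE hE1 hS
  have key : (1:ℝ) ≤ (Eel * Sel * Eel) aG := le_trans (one_le_prod3 hE hS hE1) h
  nlinarith

lemma mE_b_pos : 0 < mE bG := by
  rw [mE, ma_smul_apply, smul_eq_mul]
  have h := triple_ge Eel_nonneg Sel_nonneg Eel_nonneg 1 bG bG
  simp only [inv_one, one_mul, inv_mul_cancel] at h
  have hE1 := Eel_ge_one 1
  have hS := Sel_ge bG bG (by simp)
  rw [sg_self] at hE1 hS
  have key : (1:ℝ) ≤ (Eel * Sel * Eel) bG := le_trans (one_le_prod3 hE1 hS hE1) h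
  nlinarith

lemma mB_one_pos : 0 < mB 1 := by
  rw [mB, ma_smul_apply, smul_eq_mul]
  have h := triple_ge Bel_nonneg Sel_nonneg Bel_nonneg 1 1 1
  simp only [mul_one, inv_one, one_mul] at h
  have hB := Bel_ge_one 1
  have hS := Sel_ge 1 1 (by simp)
  rw [sg_self] at hB hS
  have key : (1:ℝ) ≤ (Bel * Sel * Bel) 1 := le_trans (one_le_prod3 hB hS hB) h
  nlinarith

lemma mB_a_pos : 0 < mB aG := by
  rw [mB, ma_smul_apply, smul_eq_mul]
  have h := triple_ge Bel_nonneg Sel_nonneg Bel_nonneg 1 aG aG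
  simp only [inv_one, one_mul, inv_mul_cancel] at h
  have hB := Bel_ge_one 1
  have hS := Sel_ge aG aG (by simp)
  rw [sg_self] at hB hS
  have key : (1:ℝ) ≤ (Bel * Sel * Bel) aG := le_trans (one_le_prod3 hB hS hB) h
  nlinarith

lemma mB_b_pos : 0 < mB bG := by
  rw [mB, ma_smul_apply, smul_eq_mul]
  have h := triple_ge Bel_nonneg Sel_nonneg Bel_nonneg 1 bG bG
  simp only [inv_one, one_mul, inv_mul_cancel] at h
  have hB := Bel_ge_one 1
  have hS := Sel_ge bG bG (by simp)
  rw [sg_self] at hB hS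
  have key : (1:ℝ) ≤ (Bel * Sel * Bel) bG := le_trans (one_le_prod3 hB hS hB) h
  nlinarith

lemma totalMass_Eel : totalMass Eel = 2 := by
  rw [Eel, map_add, sg, sg, totalMass_single, totalMass_single]; norm_num

lemma totalMass_Bel : totalMass Bel = 3 := by
  rw [Bel, map_add, map_add, sg, sg, sg, totalMass_single, totalMass_single, totalMass_single]
  norm_num

lemma totalMass_Sel : totalMass Sel = 4 := by
  rw [Sel, map_add, map_add, map_add, sg, sg, sg, sg, totalMass_single, totalMass_single,
    totalMass_single, totalMass_single]
  norm_num

lemma isProb_mE : IsProb (⇑mE) := by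
  refine ⟨mE_nonneg, ?_⟩
  rw [tsum_coe, mE, map_smul, map_mul, map_mul, totalMass_Eel, totalMass_Sel]
  norm_num

lemma isProb_mB : IsProb (⇑mB) := by
  refine ⟨mB_nonneg, ?_⟩
  rw [tsum_coe, mB, map_smul, map_mul, map_mul, totalMass_Bel, totalMass_Sel]
  norm_num

lemma rev_Eel : rev Eel = Eel := by
  rw [Eel, rev_add, sg, sg, rev_single, rev_single, inv_one, aG_inv]

lemma rev_Bel : rev Bel = Bel := by
  rw [Bel, rev_add, rev_add, sg, sg, sg, rev_single, rev_single, rev_single, inv_one,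
    bG_inv, bG_sq_inv]
  abel

lemma rev_Sel : rev Sel = Sel := by
  rw [Sel, rev_add, rev_add, rev_add, sg, sg, sg, sg, rev_single, rev_single, rev_single,
    rev_single, inv_one, aG_inv, bG_inv, bG_sq_inv]
  abel

lemma rev_mE : rev mE = mE := by
  rw [mE, rev_smul, rev_mul, rev_mul, rev_Eel, rev_Sel]
  rw [mul_assoc]

lemma rev_mB : rev mB = mB := by
  rw [mB, rev_smul, rev_mul, rev_mul, rev_Bel, rev_Sel]
  rw [mul_assoc]

lemma measSymm_mE : MeasSymm (⇑mE) := by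
  intro x
  have h := rev_apply mE x
  rw [rev_mE] at h
  exact h.symm

lemma measSymm_mB : MeasSymm (⇑mB) := by
  intro x
  have h := rev_apply mB x
  rw [rev_mB] at h
  exact h.symm

lemma measSymm_pow_mE (n : ℕ) (x : G) : (mE ^ n) x⁻¹ = (mE ^ n) x := by
  have h := rev_apply (mE ^ n) x
  rw [rev_pow mE rev_mE n] at h
  exact h.symm

lemma isAperiodic_of_one_pos {m : MonoidAlgebra ℝ G} (h : 0 < m 1) :
    IsAperiodic (⇑m) := by
  intro d hd
  have h1 : 0 < convPow (⇑m) 1 1 := by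
    rw [convPow_coe, pow_one]; exact h
  exact Nat.dvd_one.mp (hd 1 le_rfl h1)

lemma generating_of_ab {m : MonoidAlgebra ℝ G} (ha : 0 < m aG) (hb : 0 < m bG) :
    GeneratingSupport (⇑m) := by
  unfold GeneratingSupport
  apply le_antisymm le_top
  rw [← closure_ab_top]
  apply Subgroup.closure_mono
  rintro x (rfl | rfl)
  · exact ha
  · exact hb

end Meas

end Stmt13Aux

namespace Stmt13Aux

section Inv

lemma sg_mul_Eel : sg aG * Eel = Eel := by
  rw [Eel, mul_add, sg_mul, sg_mul, mul_one, aG_sq]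
  abel

lemma sg_mul_Bel : sg bG * Bel = Bel := by
  rw [Bel, mul_add, mul_add, sg_mul, sg_mul, sg_mul, mul_one, ← mul_assoc, bG_cube]
  abel

lemma a_mE : sg aG * mE = mE := by
  rw [mE, mul_smul_comm, ← mul_assoc, ← mul_assoc, sg_mul_Eel]

lemma b_mB : sg bG * mB = mB := by
  rw [mB, mul_smul_comm, ← mul_assoc, ← mul_assoc, sg_mul_Bel]

lemma a_mE_pow (n : ℕ) : sg aG * mE ^ (n + 1) = mE ^ (n + 1) := by
  rw [pow_succ', ← mul_assoc, a_mE]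

lemma b_mB_pow (n : ℕ) : sg bG * mB ^ (n + 1) = mB ^ (n + 1) := by
  rw [pow_succ', ← mul_assoc, b_mB]

lemma b2_mB_pow (n : ℕ) : sg (bG * bG) * mB ^ (n + 1) = mB ^ (n + 1) := by
  rw [← sg_mul, mul_assoc, b_mB_pow, b_mB_pow]

lemma inv_shift {f : MonoidAlgebra ℝ G} {g : G} (h : sg g * f = f) (x : G) :
    f (g⁻¹ * x) = f x := by
  have h1 : (sg g * f) x = 1 * f (g⁻¹ * x) := MonoidAlgebra.coeff_single_mul_apply f 1 g x
  rw [h] at h1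
  rw [one_mul] at h1
  exact h1.symm

lemma mE_pow_a_shift (n : ℕ) (x : G) : (mE ^ (n+1)) (aG * x) = (mE ^ (n+1)) x := by
  have := inv_shift (a_mE_pow n) x
  rwa [aG_inv] at this

lemma pow_one_pos {m : MonoidAlgebra ℝ G} (h0 : ∀ x, 0 ≤ m x) (h : 0 < m 1) :
    ∀ n, 0 < (m ^ n) 1
  | 0 => by
    rw [pow_zero]
    show (0:ℝ) < (1 : MonoidAlgebra ℝ G) 1
    rw [MonoidAlgebra.one_def, ma_single_apply]
    norm_num
  | (n+1) => by
    rw [pow_succ]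
    have hle := mul_apply_le (f := m ^ n) (g := m) (pow_nonneg_coe h0 n) h0 1 1
    rw [inv_one, one_mul] at hle
    have := pow_one_pos h0 h n
    nlinarith

lemma tendsto_of_eventually_one {f : ℕ → ℝ} (h : ∀ n, 1 ≤ n → f n = 1) :
    Tendsto f atTop (𝓝 1) := by
  apply Tendsto.congr' (f₁ := fun _ => (1:ℝ))
  · rw [Filter.EventuallyEq, eventually_atTop]
    exact ⟨1, fun n hn => (h n hn).symm⟩
  · exact tendsto_const_nhds

lemma aG_mem_Amu : aG ∈ Amu (⇑mE) := by
  apply tendsto_of_eventually_one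
  intro n hn
  obtain ⟨k, rfl⟩ := Nat.exists_eq_add_of_le hn
  rw [convPow_coe]
  have h1 : (mE ^ (1 + k)) aG = (mE ^ (1 + k)) 1 := by
    have := inv_shift (Nat.add_comm 1 k ▸ a_mE_pow k) aG
    rw [aG_inv, aG_sq] at this
    exact this.symm
  rw [h1]
  exact div_self (ne_of_gt (pow_one_pos mE_nonneg mE_one_pos (1 + k)))

lemma bG_mem_Amu : bG ∈ Amu (⇑mB) := by
  apply tendsto_of_eventually_one
  intro n hn
  obtain ⟨k, rfl⟩ := Nat.exists_eq_add_of_le hn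
  rw [convPow_coe]
  have h1 : (mB ^ (1 + k)) bG = (mB ^ (1 + k)) 1 := by
    have := inv_shift (Nat.add_comm 1 k ▸ b_mB_pow k) bG
    rw [inv_mul_cancel] at this
    exact this.symm
  rw [h1]
  exact div_self (ne_of_gt (pow_one_pos mB_nonneg mB_one_pos (1 + k)))

lemma bG2_mem_Amu : bG * bG ∈ Amu (⇑mB) := by
  apply tendsto_of_eventually_one
  intro n hn
  obtain ⟨k, rfl⟩ := Nat.exists_eq_add_of_le hn
  rw [convPow_coe]
  have h1 : (mB ^ (1 + k)) (bG * bG) = (mB ^ (1 + k)) 1 := by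
    have := inv_shift (Nat.add_comm 1 k ▸ b2_mB_pow k) (bG * bG)
    rw [inv_mul_cancel] at this
    exact this.symm
  rw [h1]
  exact div_self (ne_of_gt (pow_one_pos mB_nonneg mB_one_pos (1 + k)))

lemma fg_G : Group.FG G := by
  rw [Group.fg_iff]
  exact ⟨{aG, bG}, closure_ab_top, (Set.finite_singleton bG).insert aG⟩

end Inv

end Stmt13Aux

namespace Stmt13Aux

section Core

lemma disjPQ {x : G} (h1 : x ∈ Pa) (h2 : x ∈ Qb) : False := by
  have e : (some Ltr.A : Option Ltr) = some Ltr.B1 := h1.symm.trans h2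
  simp at e

lemma disjPR {x : G} (h1 : x ∈ Pa) (h2 : x ∈ Rb) : False := by
  have e : (some Ltr.A : Option Ltr) = some Ltr.B2 := h1.symm.trans h2
  simp at e

lemma disjQR {x : G} (h1 : x ∈ Qb) (h2 : x ∈ Rb) : False := by
  have e : (some Ltr.B1 : Option Ltr) = some Ltr.B2 := h1.symm.trans h2
  simp at e

lemma key (N : ℕ) :
    (mE ^ (2*(N+1))) 1 / 2 ≤
      Real.sqrt (8 * (mE ^ (2*(N+1))) 1 *
          ((mE ^ (2*(N+1))) 1 - (mE ^ (2*(N+1))) (bG * bG)))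
        + Real.sqrt (8 * (mE ^ (2*(N+1))) 1 *
          ((mE ^ (2*(N+1))) 1 - (mE ^ (2*(N+1))) bG)) := by
  set n := N + 1 with hn
  set u : G → ℝ := fun x => (mE ^ n) x with hu
  have usym : ∀ x : G, u x⁻¹ = u x := fun x => measSymm_pow_mE n x
  have unn : ∀ x : G, 0 ≤ u x := fun x => pow_nonneg_coe mE_nonneg n x
  have hshift : ∀ x : G, u (aG * x) = u x := fun x => mE_pow_a_shift N x
  set c := (mE ^ (2*n)) 1 with hc
  -- the master identity
  have A1 : ∀ g : G, ∑' x, u x * u (g * x) = (mE ^ (2*n)) g⁻¹ := by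
    intro g
    have e1 : (mE ^ (2*n)) g⁻¹ = ∑' y, (mE ^ n) y * (mE ^ n) (y⁻¹ * g⁻¹) := by
      rw [two_mul, pow_add]; exact mul_apply_tsum _ _ _
    rw [e1]
    apply tsum_congr
    intro y
    have : u (g * y) = (mE ^ n) (y⁻¹ * g⁻¹) := by
      rw [← usym (g * y), mul_inv_rev]
    rw [this]
  have A2 : ∑' x, u x * u x = c := by
    have := A1 1
    simpa using this
  -- the common support finset
  set s : Finset G := (mE ^ n).coeff.support ∪ ((mE ^ n).coeff.support.image (fun y => bG⁻¹ * y))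
      ∪ ((mE ^ n).coeff.support.image (fun y => (bG*bG)⁻¹ * y)) with hs
  have hu0 : ∀ x ∉ s, u x = 0 := by
    intro x hx
    by_contra h
    exact hx (Finset.mem_union_left _ (Finset.mem_union_left _
      (Finsupp.mem_support_iff.2 h)))
  have hw0 : ∀ x ∉ s, u (bG * x) = 0 := by
    intro x hx
    by_contra h
    apply hx
    apply Finset.mem_union_left
    apply Finset.mem_union_right
    apply Finset.mem_image.2
    exact ⟨bG * x, Finsupp.mem_support_iff.2 h, by group⟩
  have hw0' : ∀ x ∉ s, u ((bG * bG) * x) = 0 := by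
    intro x hx
    by_contra h
    apply hx
    apply Finset.mem_union_right
    apply Finset.mem_image.2
    exact ⟨(bG * bG) * x, Finsupp.mem_support_iff.2 h, by group⟩
  have summ : ∀ F : G → ℝ, (∀ x ∉ s, F x = 0) → Summable F := by
    intro F h
    exact summable_of_ne_finset_zero h
  -- splitting lemma : A_P = c/2
  have hPa : ∀ x : G, ((aG * x) ∈ Pa) ↔ x ∉ Pa := by
    intro x
    have := mem_Pa_iff x
    tauto
  have B1 : ∑' x, (if x ∈ Pa then u x^2 else 0) = c / 2 := by
    have e := Equiv.tsum_eq (Equiv.mulLeft aG) (fun x => if x ∈ Pa then u x^2 else 0)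
    have e2 : (fun y => if (Equiv.mulLeft aG y) ∈ Pa then u (Equiv.mulLeft aG y)^2 else 0)
        = (fun y => if y ∉ Pa then u y^2 else 0) := by
      funext y
      have hm : (Equiv.mulLeft aG) y = aG * y := rfl
      rw [hm, hshift]
      by_cases h : y ∈ Pa <;> simp [hPa, h]
    rw [e2] at e
    have hsplit : (∑' x, (if x ∈ Pa then u x^2 else 0))
        + (∑' x, (if x ∉ Pa then u x^2 else 0)) = c := by
      rw [← Summable.tsum_add (summ _ (fun x hx => by rw [hu0 x hx]; simp))
        (summ _ (fun x hx => by rw [hu0 x hx]; simp))]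
      rw [← A2]
      apply tsum_congr
      intro x
      rw [sq]
      by_cases h : x ∈ Pa <;> simp [h]
    linarith [e, hsplit]
  -- correlation identities
  have cor1 : ∑' x, u x * u (bG * x) = (mE ^ (2*n)) (bG * bG) := by
    rw [A1 bG, bG_inv]
  have cor2 : ∑' x, u x * u ((bG * bG) * x) = (mE ^ (2*n)) bG := by
    rw [A1 (bG * bG), bG_sq_inv]
  have sq1 : ∑' x, u (bG * x) * u (bG * x) = c := by
    have e := Equiv.tsum_eq (Equiv.mulLeft bG) (fun x => u x * u x)
    rw [← A2, ← e]
    rfl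
  have sq2 : ∑' x, u ((bG * bG) * x) * u ((bG * bG) * x) = c := by
    have e := Equiv.tsum_eq (Equiv.mulLeft (bG * bG)) (fun x => u x * u x)
    rw [← A2, ← e]
    rfl
  -- pass to finset sums
  have ts : ∀ F : G → ℝ, (∀ x ∉ s, F x = 0) → ∑' x, F x = ∑ x ∈ s, F x := by
    intro F h
    exact tsum_eq_sum h
  -- the Cauchy-Schwarz step, for a shift g with target set T
  have main : ∀ (g : G) (T : Set G), (∀ x, x ∈ Pa → g * x ∈ T) →
      (∀ x ∉ s, u (g * x) = 0) →
      c / 2 - Real.sqrt ((2*c - 2*(∑' x, u x * u (g * x))) * (4*c))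
        ≤ ∑' x, (if x ∈ T then u x^2 else 0) := by
    intro g T hT hg0
    set w : G → ℝ := fun x => u (g * x) with hw
    set cr := ∑' x, u x * w x with hcr
    have hcrc : cr ≤ c := by
      have hnn : 0 ≤ ∑ x ∈ s, (u x - w x)^2 :=
        Finset.sum_nonneg (fun x _ => sq_nonneg _)
      have expand : ∑ x ∈ s, (u x - w x)^2
          = (∑ x ∈ s, u x * u x) - 2 * (∑ x ∈ s, u x * w x) + ∑ x ∈ s, w x * w x := by
        rw [Finset.mul_sum, ← Finset.sum_sub_distrib, ← Finset.sum_add_distrib]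
        exact Finset.sum_congr rfl (fun x _ => by ring)
      rw [expand, ← ts _ (fun x hx => by rw [hu0 x hx, mul_zero]),
        ← ts _ (fun x hx => by rw [hu0 x hx, zero_mul]),
        ← ts _ (fun x hx => by show u (g*x) * u (g*x) = 0; rw [hg0 x hx, zero_mul]),
        A2] at hnn
      have hsq : ∑' x, w x * w x = c := by
        have e := Equiv.tsum_eq (Equiv.mulLeft g) (fun x => u x * u x)
        rw [← A2, ← e]
        rfl
      rw [hsq] at hnn
      linarith
    -- finset versions of the basic identities
    have hsq : ∑' x, w x * w x = c := by
      have e := Equiv.tsum_eq (Equiv.mulLeft g) (fun x => u x * u x)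
      rw [← A2, ← e]
      rfl
    have fu : ∑ x ∈ s, u x * u x = c := by
      rw [← ts _ (fun x hx => by rw [hu0 x hx, mul_zero]), A2]
    have fw : ∑ x ∈ s, w x * w x = c := by
      rw [← ts _ (fun x hx => by show u (g*x) * u (g*x) = 0; rw [hg0 x hx, mul_zero]), hsq]
    have fuw : ∑ x ∈ s, u x * w x = cr := by
      rw [hcr, ts _ (fun x hx => by rw [hu0 x hx, zero_mul])]
    have hdm : ∑ x ∈ s, (u x - w x)^2 = 2*c - 2*cr := by
      have expand : ∑ x ∈ s, (u x - w x)^2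
          = (∑ x ∈ s, u x * u x) - 2 * (∑ x ∈ s, u x * w x) + ∑ x ∈ s, w x * w x := by
        rw [Finset.mul_sum, ← Finset.sum_sub_distrib, ← Finset.sum_add_distrib]
        exact Finset.sum_congr rfl (fun x _ => by ring)
      rw [expand, fu, fw, fuw]; ring
    have hdp : ∑ x ∈ s, (u x + w x)^2 = 2*c + 2*cr := by
      have expand : ∑ x ∈ s, (u x + w x)^2
          = (∑ x ∈ s, u x * u x) + 2 * (∑ x ∈ s, u x * w x) + ∑ x ∈ s, w x * w x := by
        rw [Finset.mul_sum, ← Finset.sum_add_distrib, ← Finset.sum_add_distrib]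
        exact Finset.sum_congr rfl (fun x _ => by ring)
      rw [expand, fu, fw, fuw]; ring
    have hdmnn : (0:ℝ) ≤ 2*c - 2*cr := by
      rw [← hdm]; exact Finset.sum_nonneg (fun x _ => sq_nonneg _)
    -- Cauchy-Schwarz
    have cs : (∑ x ∈ s, ((if x ∈ Pa then (1:ℝ) else 0) * (u x - w x))
          * ((if x ∈ Pa then (1:ℝ) else 0) * (u x + w x)))^2
        ≤ (2*c - 2*cr) * (2*c + 2*cr) := by
      refine le_trans (Finset.sum_mul_sq_le_sq_mul_sq s _ _) ?_
      rw [← hdm, ← hdp]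
      apply mul_le_mul
      · apply Finset.sum_le_sum
        intro x _
        by_cases h : x ∈ Pa <;> simp [h, sq_nonneg]
      · apply Finset.sum_le_sum
        intro x _
        by_cases h : x ∈ Pa <;> simp [h, sq_nonneg]
      · exact Finset.sum_nonneg (fun x _ => sq_nonneg _)
      · exact Finset.sum_nonneg (fun x _ => sq_nonneg _)
    have keyident : ∑ x ∈ s, ((if x ∈ Pa then (1:ℝ) else 0) * (u x - w x))
          * ((if x ∈ Pa then (1:ℝ) else 0) * (u x + w x))
        = (∑ x ∈ s, (if x ∈ Pa then u x^2 else 0))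
          - (∑ x ∈ s, (if x ∈ Pa then w x^2 else 0)) := by
      rw [← Finset.sum_sub_distrib]
      apply Finset.sum_congr rfl
      intro x _
      by_cases h : x ∈ Pa <;> simp [h] <;> ring
    have APs : ∑ x ∈ s, (if x ∈ Pa then u x^2 else 0) = c/2 := by
      rw [← ts _ (fun x hx => by rw [hu0 x hx]; simp), B1]
    have bound : c/2 - (∑ x ∈ s, (if x ∈ Pa then w x^2 else 0))
        ≤ Real.sqrt ((2*c - 2*cr)*(4*c)) := by
      have h1 : (c/2 - (∑ x ∈ s, (if x ∈ Pa then w x^2 else 0)))^2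
          ≤ (2*c - 2*cr) * (2*c + 2*cr) := by
        rw [← APs, ← keyident]; exact cs
      calc c/2 - (∑ x ∈ s, (if x ∈ Pa then w x^2 else 0))
          ≤ |c/2 - (∑ x ∈ s, (if x ∈ Pa then w x^2 else 0))| := le_abs_self _
        _ = Real.sqrt ((c/2 - (∑ x ∈ s, (if x ∈ Pa then w x^2 else 0)))^2) :=
            (Real.sqrt_sq_eq_abs _).symm
        _ ≤ Real.sqrt ((2*c - 2*cr) * (2*c + 2*cr)) := Real.sqrt_le_sqrt h1
        _ ≤ Real.sqrt ((2*c - 2*cr)*(4*c)) := by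
            apply Real.sqrt_le_sqrt
            apply mul_le_mul_of_nonneg_left _ hdmnn
            linarith
    have WT : (∑ x ∈ s, (if x ∈ Pa then w x^2 else 0))
        ≤ ∑' x, (if x ∈ T then u x^2 else 0) := by
      have hz : ∀ x ∉ s, (if x ∈ Pa then w x^2 else 0) = 0 := by
        intro x hx
        have hwx : w x = 0 := hg0 x hx
        rw [hwx]
        simp
      rw [← ts _ hz]
      have e := Equiv.tsum_eq (Equiv.mulLeft g) (fun y => if g⁻¹ * y ∈ Pa then u y^2 else 0)
      have e2 : (fun x => if g⁻¹ * ((Equiv.mulLeft g) x) ∈ Pa then u ((Equiv.mulLeft g) x)^2 else 0)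
          = (fun x => if x ∈ Pa then w x^2 else 0) := by
        funext x
        have hm : (Equiv.mulLeft g) x = g * x := rfl
        rw [hm, inv_mul_cancel_left]
      rw [e2] at e
      rw [e]
      apply Summable.tsum_le_tsum
      · intro y
        by_cases h : g⁻¹ * y ∈ Pa
        · rw [if_pos h, if_pos (by have := hT _ h; rwa [mul_inv_cancel_left] at this)]
        · rw [if_neg h]
          by_cases h2 : y ∈ T
          · rw [if_pos h2]; exact sq_nonneg _
          · rw [if_neg h2]
      · exact summ _ (fun x hx => by rw [hu0 x hx]; simp)
      · exact summ _ (fun x hx => by rw [hu0 x hx]; simp)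
    linarith
  -- instantiate for Q and R
  have m1 := main bG Qb (fun x hx => mem_Qb_of_Pa hx) hw0
  have m2 := main (bG * bG) Rb (fun x hx => mem_Rb_of_Pa hx) hw0'
  rw [cor1] at m1
  rw [cor2] at m2
  -- disjointness bound
  have tripl : (∑' x, (if x ∈ Pa then u x^2 else 0)) + (∑' x, (if x ∈ Qb then u x^2 else 0))
      + (∑' x, (if x ∈ Rb then u x^2 else 0)) ≤ c := by
    rw [← Summable.tsum_add (summ _ (fun x hx => by rw [hu0 x hx]; simp))
      (summ _ (fun x hx => by rw [hu0 x hx]; simp)),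
      ← Summable.tsum_add (Summable.add (summ _ (fun x hx => by rw [hu0 x hx]; simp))
        (summ _ (fun x hx => by rw [hu0 x hx]; simp)))
        (summ _ (fun x hx => by rw [hu0 x hx]; simp)), ← A2]
    apply Summable.tsum_le_tsum _ (summ _ (fun x hx => by rw [hu0 x hx]; simp))
      (summ _ (fun x hx => by rw [hu0 x hx, mul_zero]))
    intro x
    rw [← sq]
    by_cases h1 : x ∈ Pa
    · rw [if_pos h1, if_neg (fun h2 => disjPQ h1 h2), if_neg (fun h2 => disjPR h1 h2)]
      simp [sq_nonneg]
    · rw [if_neg h1]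
      by_cases h2 : x ∈ Qb
      · rw [if_pos h2, if_neg (fun h3 => disjQR h2 h3)]
        simp [sq_nonneg]
      · rw [if_neg h2]
        by_cases h3 : x ∈ Rb
        · simp [h3, sq_nonneg]
        · simp [h3, sq_nonneg]
  have e1 : (2*c - 2*((mE ^ (2*n)) (bG*bG)))*(4*c) = 8 * c * (c - (mE ^ (2*n)) (bG*bG)) := by
    ring
  have e2 : (2*c - 2*((mE ^ (2*n)) bG))*(4*c) = 8 * c * (c - (mE ^ (2*n)) bG) := by
    ring
  rw [e1] at m1
  rw [e2] at m2
  have goal2 : c / 2 ≤ Real.sqrt (8 * c * (c - (mE ^ (2*n)) (bG*bG)))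
      + Real.sqrt (8 * c * (c - (mE ^ (2*n)) bG)) := by
    linarith [B1, m1, m2, tripl]
  exact goal2

end Core

end Stmt13Aux

namespace Stmt13Aux

section Final

lemma core_contra
    (hb : Tendsto (fun k => (mE ^ k) bG / (mE ^ k) 1) atTop (𝓝 1))
    (hb2 : Tendsto (fun k => (mE ^ k) (bG * bG) / (mE ^ k) 1) atTop (𝓝 1)) :
    False := by
  have hmono : Tendsto (fun N : ℕ => 2 * (N + 1)) atTop atTop :=
    tendsto_atTop_mono (fun n => (by simp only [id]; omega : id n ≤ 2*(n+1))) tendsto_id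
  have h1 : Tendsto (fun N => (mE ^ (2*(N+1))) bG / (mE ^ (2*(N+1))) 1) atTop (𝓝 1) :=
    hb.comp hmono
  have h2 : Tendsto (fun N => (mE ^ (2*(N+1))) (bG * bG) / (mE ^ (2*(N+1))) 1) atTop (𝓝 1) :=
    hb2.comp hmono
  have hev1 := h1.eventually (lt_mem_nhds (show (1:ℝ) - 1/256 < 1 by norm_num))
  have hev2 := h2.eventually (lt_mem_nhds (show (1:ℝ) - 1/256 < 1 by norm_num))
  obtain ⟨N, hN1, hN2⟩ := (hev1.and hev2).exists
  set c := (mE ^ (2*(N+1))) 1 with hc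
  have hcpos : 0 < c := pow_one_pos mE_nonneg mE_one_pos _
  have hb1' : c - (mE ^ (2*(N+1))) bG < c/256 := by
    have := (lt_div_iff₀ hcpos).1 hN1
    linarith
  have hb2' : c - (mE ^ (2*(N+1))) (bG * bG) < c/256 := by
    have := (lt_div_iff₀ hcpos).1 hN2
    linarith
  have hk := key N
  have harg1 : 8 * c * (c - (mE ^ (2*(N+1))) (bG * bG)) ≤ (c/5)^2 := by
    have h8 : (0:ℝ) < 8 * c := by linarith
    have := mul_lt_mul_of_pos_left hb2' h8
    nlinarith
  have harg2 : 8 * c * (c - (mE ^ (2*(N+1))) bG) ≤ (c/5)^2 := by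
    have h8 : (0:ℝ) < 8 * c := by linarith
    have := mul_lt_mul_of_pos_left hb1' h8
    nlinarith
  have hs1 : Real.sqrt (8 * c * (c - (mE ^ (2*(N+1))) (bG * bG))) ≤ c/5 := by
    calc Real.sqrt (8 * c * (c - (mE ^ (2*(N+1))) (bG * bG)))
        ≤ Real.sqrt ((c/5)^2) := Real.sqrt_le_sqrt harg1
      _ = c/5 := Real.sqrt_sq (by linarith)
  have hs2 : Real.sqrt (8 * c * (c - (mE ^ (2*(N+1))) bG)) ≤ c/5 := by
    calc Real.sqrt (8 * c * (c - (mE ^ (2*(N+1))) bG))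
        ≤ Real.sqrt ((c/5)^2) := Real.sqrt_le_sqrt harg2
      _ = c/5 := Real.sqrt_sq (by linarith)
  linarith

lemma amu_ne : Amu (⇑mE) ≠ Amu (⇑mB) := by
  intro h
  have hbmem : bG ∈ Amu (⇑mE) := h.symm ▸ bG_mem_Amu
  have hb2mem : bG * bG ∈ Amu (⇑mE) := h.symm ▸ bG2_mem_Amu
  have e1 : (fun n => convPow (⇑mE) n bG / convPow (⇑mE) n 1)
      = fun n => (mE ^ n) bG / (mE ^ n) 1 := by
    funext n
    rw [convPow_coe]
  have e2 : (fun n => convPow (⇑mE) n (bG * bG) / convPow (⇑mE) n 1)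
      = fun n => (mE ^ n) (bG * bG) / (mE ^ n) 1 := by
    funext n
    rw [convPow_coe]
  have hb : Tendsto (fun k => (mE ^ k) bG / (mE ^ k) 1) atTop (𝓝 1) := by
    rw [← e1]; exact hbmem
  have hb2 : Tendsto (fun k => (mE ^ k) (bG * bG) / (mE ^ k) 1) atTop (𝓝 1) := by
    rw [← e2]; exact hb2mem
  exact core_contra hb hb2

end Final

end Stmt13Aux

theorem stmt13 :
    ∃ (G : Type) (inst : Group G) (μ τ : G → ℝ), Stmt13Witness G μ τ := by
  refine ⟨Stmt13Aux.G, inferInstance, ⇑Stmt13Aux.mE, ⇑Stmt13Aux.mB,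
    Stmt13Aux.fg_G, Stmt13Aux.isProb_mE, Stmt13Aux.measSymm_mE,
    Stmt13Aux.isAperiodic_of_one_pos Stmt13Aux.mE_one_pos,
    Stmt13Aux.generating_of_ab Stmt13Aux.mE_a_pos Stmt13Aux.mE_b_pos,
    Stmt13Aux.isProb_mB, Stmt13Aux.measSymm_mB,
    Stmt13Aux.isAperiodic_of_one_pos Stmt13Aux.mB_one_pos,
    Stmt13Aux.generating_of_ab Stmt13Aux.mB_a_pos Stmt13Aux.mB_b_pos,
    Stmt13Aux.amu_ne⟩
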